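/- arXiv:1911.02267 — 5 statements merged into one kernel-verified Lean document; each statement's English description precedes it below -/
import Mathlib

section
/- Let R be a discrete valuation ring with fraction field K, and let f : A → B be a homomorphism of commutative R-algebras such that A and B are flat as R-modules, B is finite as an A-module (via f), and the induced map A ⊗_R K → B ⊗_R K on generic fibers is bijective. If there exists an A-linear map u : B → A with u(1) = 1, then f : A → B is bijective. -/
open scoped TensorProduct

/-- Let `R` be a discrete valuation ring with fraction field `K`, and let
`f : A → B` be a homomorphism of commutative `R`-algebras with `A`, `B` flat over `R`,
`B` finite as an `A`-module (via `f`), and such that `A ⊗[R] K → B ⊗[R] K` is bijective.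
If there is an `A`-linear map `u : B → A` with `u 1 = 1`, then `f` is bijective. -/
theorem statement1 (R K A B : Type*) [CommRing R] [IsDomain R] [IsDiscreteValuationRing R]
    [Field K] [Algebra R K] [IsFractionRing R K]
    [CommRing A] [CommRing B] [Algebra R A] [Algebra R B]
    [Module.Flat R A] [Module.Flat R B]
    (f : A →ₐ[R] B) [Algebra A B]
    (halg : (algebraMap A B : A →+* B) = f.toRingHom)
    [Module.Finite A B]
    (hK : Function.Bijective
      (Algebra.TensorProduct.map f (AlgHom.id R K) : A ⊗[R] K →ₐ[R] B ⊗[R] K))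
    (u : B →ₗ[A] A) (hu : u 1 = 1) :
    Function.Bijective f := by
  -- compatibility of scalar actions
  have hsmul : ∀ (r : R) (b : B), (algebraMap R A r) • b = r • b := by
    intro r b
    rw [Algebra.smul_def, Algebra.smul_def, halg]
    simp [f.commutes]
  have huf : ∀ a : A, u (f a) = a := by
    intro a
    have h1 : f a = a • (1 : B) := by
      rw [Algebra.smul_def, halg, mul_one]; rfl
    rw [h1, map_smul, hu, smul_eq_mul, mul_one]
  -- u as an R-linear map
  let u' : B →ₗ[R] A :=
    { toFun := u
      map_add' := map_add u
      map_smul' := by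
        intro r b
        simp only [RingHom.id_apply]
        rw [← hsmul r b, map_smul, smul_eq_mul, Algebra.smul_def] }
  set F := (Algebra.TensorProduct.map f (AlgHom.id R K)).toLinearMap with hF
  set G := LinearMap.rTensor K u' with hG
  have hGF : G ∘ₗ F = LinearMap.id := by
    apply TensorProduct.ext'
    intro a k
    simp [hF, hG, huf, u']
  -- the map b ↦ b ⊗ 1 is injective, since B is flat over R
  let j : B →ₗ[R] B ⊗[R] K :=
    (LinearMap.lTensor B (Algebra.linearMap R K)) ∘ₗ
      (TensorProduct.rid R B).symm.toLinearMap
  have hjinj : Function.Injective j := by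
    have h1 := Module.Flat.lTensor_preserves_injective_linearMap (M := B)
      (Algebra.linearMap R K) (IsFractionRing.injective R K)
    simp only [j, LinearMap.coe_comp]
    exact h1.comp (TensorProduct.rid R B).symm.injective
  have hj : ∀ b : B, j b = b ⊗ₜ[R] (1 : K) := by
    intro b
    simp [j, Algebra.linearMap_apply, map_one]
  -- key: elements of ker u vanish
  have hker : ∀ c : B, u c = 0 → c = 0 := by
    intro c hc
    obtain ⟨x, hx⟩ := hK.2 (c ⊗ₜ[R] (1 : K))
    have hx0 : x = 0 := by
      have h2 : G (F x) = x := by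
        have := congrArg (fun φ => φ x) hGF
        simpa using this
      calc x = G (F x) := h2.symm
        _ = G (c ⊗ₜ[R] (1 : K)) := by rw [show F x = c ⊗ₜ[R] (1 : K) from hx]
        _ = 0 := by simp [hG, u', hc]
    have : c ⊗ₜ[R] (1 : K) = 0 := by
      rw [← hx, hx0]; simp [hF]
    apply hjinj
    rw [hj c, this, map_zero]
  constructor
  · intro a₁ a₂ h
    have := congrArg u h
    rwa [huf, huf] at this
  · intro b
    refine ⟨u b, ?_⟩
    have hc : u (b - f (u b)) = 0 := by
      rw [map_sub, huf, sub_self]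
    have := hker _ hc
    have := sub_eq_zero.mp this
    exact this.symm
end

section
/- Let p be a prime, R a complete discrete valuation ring of characteristic p, λ an element of the maximal ideal of R, and f ∈ R. Then the R-algebra homomorphism R[W₁, W₂]/(W₁^p − f, W₂^p − f) → R[x, W]/(x^p, W^p − f) determined by W₁ ↦ x + W + λ·x·W and W₂ ↦ W (which is well defined since (x + W + λxW)^p = x^p + W^p + λ^p x^p W^p = f in the target) is bijective. -/
open MvPolynomial

/-- Auxiliary: in any quotient of `R[X0,X1]` (char `p`) by an ideal containing
`X1^p - C f`, the element `1 + lam·X1` is invertible with inverse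
`(1 + lam·X1)^(p-1) · c`, where `c` is an inverse of `1 + lam^p·f`. -/
lemma statement4_aux (p : ℕ) [Fact p.Prime] (R : Type*) [CommRing R] [CharP R p]
    (lam f c : R) (hc : (1 + lam ^ p * f) * c = 1)
    (I : Ideal (MvPolynomial (Fin 2) R))
    (hI : (X 1 : MvPolynomial (Fin 2) R) ^ p - C f ∈ I) :
    ((1 + algebraMap R _ lam * Ideal.Quotient.mk I (X 1)) ^ (p - 1) *
        algebraMap R _ c) *
      (1 + algebraMap R _ lam * Ideal.Quotient.mk I (X 1)) = 1 := by
  have hp1 : 1 ≤ p := (Fact.out : p.Prime).pos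
  have halg : ∀ r : R, algebraMap R (MvPolynomial (Fin 2) R ⧸ I) r =
      Ideal.Quotient.mk I (C r) := fun r => rfl
  have h2 : Ideal.Quotient.mk I ((X 1 : MvPolynomial (Fin 2) R) ^ p) =
      Ideal.Quotient.mk I (C f) := Ideal.Quotient.eq.2 hI
  have e1 : (1 : MvPolynomial (Fin 2) R ⧸ I) + algebraMap R _ lam * Ideal.Quotient.mk I (X 1)
      = Ideal.Quotient.mk I (1 + C lam * X 1) := by
    rw [map_add, map_one, map_mul, halg]
  have hVp : ((1 : MvPolynomial (Fin 2) R ⧸ I) +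
      algebraMap R _ lam * Ideal.Quotient.mk I (X 1)) ^ p
      = algebraMap R _ (1 + lam ^ p * f) := by
    rw [e1, ← map_pow, add_pow_char _ _ p, one_pow, mul_pow, ← C_pow,
      map_add, map_mul, h2, map_one, ← map_mul, ← C_mul, halg]
    simp only [map_add, map_one]
  calc ((1 + algebraMap R _ lam * Ideal.Quotient.mk I (X 1)) ^ (p - 1) *
          algebraMap R _ c) *
        (1 + algebraMap R _ lam * Ideal.Quotient.mk I (X 1))
      = ((1 + algebraMap R _ lam * Ideal.Quotient.mk I (X 1)) ^ (p - 1) *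
          (1 + algebraMap R _ lam * Ideal.Quotient.mk I (X 1))) *
        algebraMap R _ c := by ring
    _ = (1 + algebraMap R _ lam * Ideal.Quotient.mk I (X 1)) ^ (p - 1 + 1) *
        algebraMap R _ c := by rw [pow_succ]
    _ = (1 + algebraMap R _ lam * Ideal.Quotient.mk I (X 1)) ^ p *
        algebraMap R _ c := by rw [Nat.sub_add_cancel hp1]
    _ = 1 := by rw [hVp, ← map_mul, hc, map_one]

set_option maxHeartbeats 2000000 in
set_option synthInstance.maxHeartbeats 400000 in
/-- Let `p` be a prime, `R` a complete discrete valuation ring of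
characteristic `p`, `lam` an element of the maximal ideal of `R` and `f ∈ R`.  Then the
`R`-algebra homomorphism
`R[W₁,W₂]/(W₁^p - f, W₂^p - f) → R[x,W]/(x^p, W^p - f)` determined by
`W₁ ↦ x + W + lam·x·W` and `W₂ ↦ W` is bijective.  (Here `W₁, W₂` are the two variables
`X 0, X 1` of the source and `x, W` the two variables `X 0, X 1` of the target.) -/
theorem statement4 (p : ℕ) [Fact p.Prime] (R : Type*) [CommRing R] [IsDomain R]
    [IsDiscreteValuationRing R] [CharP R p]
    [IsAdicComplete (IsLocalRing.maximalIdeal R) R]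
    (lam : R) (hlam : lam ∈ IsLocalRing.maximalIdeal R) (f : R)
    (φ : (MvPolynomial (Fin 2) R ⧸
            Ideal.span {(X 0 : MvPolynomial (Fin 2) R) ^ p - C f, (X 1) ^ p - C f}) →ₐ[R]
         (MvPolynomial (Fin 2) R ⧸
            Ideal.span {(X 0 : MvPolynomial (Fin 2) R) ^ p, (X 1) ^ p - C f}))
    (hφ1 : φ (Ideal.Quotient.mk _ (X 0)) =
      Ideal.Quotient.mk _ (X 0 + X 1 + C lam * X 0 * X 1))
    (hφ2 : φ (Ideal.Quotient.mk _ (X 1)) = Ideal.Quotient.mk _ (X 1)) :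
    Function.Bijective φ := by
  classical
  -- `1 + lam^p * f` is a unit since `lam` lies in the maximal ideal
  obtain ⟨c, hc⟩ : ∃ c : R, (1 + lam ^ p * f) * c = 1 := by
    have hmem : lam ^ p * f ∈ IsLocalRing.maximalIdeal R :=
      Ideal.mul_mem_right _ _ (Ideal.pow_mem_of_mem _ hlam p (Fact.out : p.Prime).pos)
    by_contra h
    push_neg at h
    have hnu : (1 + lam ^ p * f) ∈ IsLocalRing.maximalIdeal R := by
      rw [IsLocalRing.mem_maximalIdeal, mem_nonunits_iff]
      intro hu
      obtain ⟨u, hu⟩ := hu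
      exact h ↑u⁻¹ (by rw [← hu, Units.mul_inv])
    have h1 : (1 : R) ∈ IsLocalRing.maximalIdeal R := by
      have := Ideal.sub_mem _ hnu hmem
      simpa using this
    exact (IsLocalRing.maximalIdeal.isMaximal R).ne_top
      (Ideal.eq_top_of_isUnit_mem _ h1 isUnit_one)
  have hX1I1 : (X 1 : MvPolynomial (Fin 2) R) ^ p - C f ∈
      Ideal.span {(X 0 : MvPolynomial (Fin 2) R) ^ p - C f, (X 1) ^ p - C f} :=
    Ideal.subset_span (by simp)
  have hX1I2 : (X 1 : MvPolynomial (Fin 2) R) ^ p - C f ∈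
      Ideal.span {(X 0 : MvPolynomial (Fin 2) R) ^ p, (X 1) ^ p - C f} :=
    Ideal.subset_span (by simp)
  have hsV := statement4_aux p R lam f c hc _ hX1I1
  have hsV' := statement4_aux p R lam f c hc _ hX1I2
  -- the candidate images of the generators of the target under the inverse map
  set g : Fin 2 → (MvPolynomial (Fin 2) R ⧸
      Ideal.span {(X 0 : MvPolynomial (Fin 2) R) ^ p - C f, (X 1) ^ p - C f}) :=
    ![(Ideal.Quotient.mk _ (X 0) - Ideal.Quotient.mk _ (X 1)) *
        ((1 + algebraMap R _ lam * Ideal.Quotient.mk _ (X 1)) ^ (p - 1) *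
          algebraMap R _ c),
      Ideal.Quotient.mk _ (X 1)] with hg
  have hg0 : (aeval g) (X 0 : MvPolynomial (Fin 2) R) =
      (Ideal.Quotient.mk _ (X 0) - Ideal.Quotient.mk _ (X 1)) *
        ((1 + algebraMap R _ lam * Ideal.Quotient.mk _ (X 1)) ^ (p - 1) *
          algebraMap R _ c) := by
    rw [aeval_X, hg]; rfl
  have hg1 : (aeval g) (X 1 : MvPolynomial (Fin 2) R) = Ideal.Quotient.mk _ (X 1) := by
    rw [aeval_X, hg]; rfl
  have hker : ∀ a ∈ Ideal.span {(X 0 : MvPolynomial (Fin 2) R) ^ p, (X 1) ^ p - C f},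
      (aeval g) a = 0 := by
    have h01 : (aeval g) ((X 0 : MvPolynomial (Fin 2) R) ^ p) = 0 := by
      rw [map_pow, hg0, mul_pow]
      have hsub : ((Ideal.Quotient.mk (Ideal.span {(X 0 : MvPolynomial (Fin 2) R) ^ p - C f, (X 1) ^ p - C f})) (X 0) -
          Ideal.Quotient.mk _ (X 1)) ^ p = 0 := by
        have key : (Ideal.Quotient.mk (Ideal.span {(X 0 : MvPolynomial (Fin 2) R) ^ p - C f, (X 1) ^ p - C f})) ((X 0 - X 1 : MvPolynomial (Fin 2) R) ^ p) = 0 := by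
          rw [sub_pow_char, Ideal.Quotient.eq_zero_iff_mem]
          have e : (X 0 : MvPolynomial (Fin 2) R) ^ p - (X 1) ^ p =
              ((X 0) ^ p - C f) - ((X 1) ^ p - C f) := by ring
          rw [e]
          exact Ideal.sub_mem _ (Ideal.subset_span (by simp)) hX1I1
        rw [map_pow, map_sub] at key
        exact key
      rw [hsub, zero_mul]
    have h02 : (aeval g) ((X 1 : MvPolynomial (Fin 2) R) ^ p - C f) = 0 := by
      have key : (Ideal.Quotient.mk (Ideal.span {(X 0 : MvPolynomial (Fin 2) R) ^ p - C f, (X 1) ^ p - C f})) ((X 1 : MvPolynomial (Fin 2) R) ^ p - C f) = 0 :=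
        Ideal.Quotient.eq_zero_iff_mem.2 hX1I1
      rw [map_sub, map_pow] at key
      rw [map_sub, map_pow, hg1, algHom_C]
      exact key
    intro a ha
    rw [Ideal.mem_span_pair] at ha
    obtain ⟨u, v, rfl⟩ := ha
    rw [map_add, map_mul, map_mul, h01, h02, mul_zero, mul_zero, add_zero]
  -- the inverse algebra map
  set ψ := Ideal.Quotient.liftₐ (Ideal.span {(X 0 : MvPolynomial (Fin 2) R) ^ p, (X 1) ^ p - C f}) (aeval g) hker with hψ
  have hψmk : ∀ a : MvPolynomial (Fin 2) R, ψ (Ideal.Quotient.mk _ a) = (aeval g) a := by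
    intro a
    rw [hψ, Ideal.Quotient.liftₐ_apply]
    rfl
  have hCmk1 : (Ideal.Quotient.mk (Ideal.span
      {(X 0 : MvPolynomial (Fin 2) R) ^ p - C f, (X 1) ^ p - C f})) (C lam) =
      algebraMap R _ lam := rfl
  have hCmk2 : (Ideal.Quotient.mk (Ideal.span
      {(X 0 : MvPolynomial (Fin 2) R) ^ p, (X 1) ^ p - C f})) (C lam) =
      algebraMap R _ lam := rfl
  -- ψ is a left inverse of φ
  have hL : ψ.comp φ = AlgHom.id R _ := by
    refine Ideal.Quotient.algHom_ext R (MvPolynomial.algHom_ext fun i => ?_)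
    simp only [AlgHom.comp_apply, Ideal.Quotient.mkₐ_eq_mk, AlgHom.id_apply]
    fin_cases i
    · show ψ (φ (Ideal.Quotient.mk _ (X 0))) = Ideal.Quotient.mk _ (X 0)
      rw [hφ1, hψmk, map_add, map_add, map_mul, map_mul, hg0, hg1, algHom_C]
      linear_combination (Ideal.Quotient.mk (Ideal.span
        {(X 0 : MvPolynomial (Fin 2) R) ^ p - C f, (X 1) ^ p - C f}) (X 0) -
        Ideal.Quotient.mk _ (X 1)) * hsV
    · show ψ (φ (Ideal.Quotient.mk _ (X 1))) = Ideal.Quotient.mk _ (X 1)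
      rw [hφ2, hψmk, hg1]
  -- ψ is a right inverse of φ
  have hR : φ.comp ψ = AlgHom.id R _ := by
    refine Ideal.Quotient.algHom_ext R (MvPolynomial.algHom_ext fun i => ?_)
    simp only [AlgHom.comp_apply, Ideal.Quotient.mkₐ_eq_mk, AlgHom.id_apply]
    fin_cases i
    · show φ (ψ (Ideal.Quotient.mk _ (X 0))) = Ideal.Quotient.mk _ (X 0)
      rw [hψmk, hg0, map_mul, map_sub, map_mul, map_pow, map_add, map_one, map_mul,
        AlgHom.commutes, AlgHom.commutes, hφ1, hφ2,
        map_add, map_add, map_mul, map_mul, hCmk2]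
      linear_combination (Ideal.Quotient.mk (Ideal.span
        {(X 0 : MvPolynomial (Fin 2) R) ^ p, (X 1) ^ p - C f}) (X 0)) * hsV'
    · show φ (ψ (Ideal.Quotient.mk _ (X 1))) = Ideal.Quotient.mk _ (X 1)
      rw [hψmk, hg1, hφ2]
  have hleft : Function.LeftInverse ψ φ := fun a => by
    simpa using AlgHom.congr_fun hL a
  have hright : Function.RightInverse ψ φ := fun b => by
    simpa using AlgHom.congr_fun hR b
  exact ⟨hleft.injective, hright.surjective⟩
end

section
/- Let p be a prime and R a complete discrete valuation ring with fraction field K of characteristic p, perfect residue field of characteristic p, and uniformizer π. Let u ∈ R^×, let i be an integer with 1 ≤ i ≤ p − 1, and let m, n be natural numbers with m·i = n·p + 1. Let L be a field extension of K of degree p containing an element α with α^p = u·π^i, and set τ := π^{−n}·α^m ∈ L. Then τ^p = u^m·π, the R-subalgebra R[τ] generated by τ in L is a discrete valuation ring, and R[τ] equals the integral closure of R in L; moreover R[τ] is R-isomorphic to R[T]/(T^p − u^m·π). -/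
open Polynomial

lemma peel_lemma {R : Type*} [CommRing R] [IsDomain R] {p : ℕ} {π : R} (hπ : Prime π)
    (b : ℕ → R) (v : ℕ → R) (hv : ∀ j, IsUnit (v j))
    (h : π ^ p ∣ ∑ j ∈ Finset.range p, b j ^ p * v j * π ^ j) :
    ∀ j < p, π ∣ b j := by
  intro j
  induction j using Nat.strong_induction_on with
  | _ j IH =>
    intro hjp
    have hterm : ∀ k ∈ Finset.range p, k ≠ j → π ^ (j + 1) ∣ b k ^ p * v k * π ^ k := by
      intro k hk hkj
      rcases lt_or_gt_of_ne hkj with hlt | hgt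
      · have hbk : π ∣ b k := IH k hlt (hlt.trans hjp)
        have : π ^ (j + 1) ∣ b k ^ p :=
          (pow_dvd_pow π hjp).trans (pow_dvd_pow_of_dvd hbk p)
        exact Dvd.dvd.mul_right (Dvd.dvd.mul_right this (v k)) (π ^ k)
      · exact (pow_dvd_pow π hgt).mul_left _
    have hj' : j ∈ Finset.range p := Finset.mem_range.2 hjp
    have hsum : π ^ (j + 1) ∣ ∑ k ∈ (Finset.range p).erase j, b k ^ p * v k * π ^ k :=
      Finset.dvd_sum fun k hk => hterm k (Finset.mem_of_mem_erase hk) (Finset.ne_of_mem_erase hk)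
    have htot : π ^ (j + 1) ∣ ∑ k ∈ Finset.range p, b k ^ p * v k * π ^ k :=
      (pow_dvd_pow _ hjp).trans h
    have hdvd : π ^ (j + 1) ∣ b j ^ p * v j * π ^ j := by
      have := Finset.add_sum_erase _ (fun k => b k ^ p * v k * π ^ k) hj'
      have h2 : b j ^ p * v j * π ^ j =
          (∑ k ∈ Finset.range p, b k ^ p * v k * π ^ k)
          - ∑ k ∈ (Finset.range p).erase j, b k ^ p * v k * π ^ k := by
        rw [← this]; ring
      rw [h2]; exact dvd_sub htot hsum
    have hπ0 : π ^ j ≠ 0 := pow_ne_zero _ hπ.ne_zero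
    have : π ∣ b j ^ p * v j := by
      have h3 : π ^ j * π ∣ π ^ j * (b j ^ p * v j) := by
        calc π ^ j * π = π ^ (j + 1) := by ring
        _ ∣ b j ^ p * v j * π ^ j := hdvd
        _ = π ^ j * (b j ^ p * v j) := by ring
      exact (mul_dvd_mul_iff_left hπ0).mp h3
    exact hπ.dvd_of_dvd_pow (((hv j).dvd_mul_right).mp this)

lemma not_pth_power {R : Type*} (K : Type*) [CommRing R] [IsDomain R]
    [IsDiscreteValuationRing R] [Field K] [Algebra R K] [IsFractionRing R K]
    {p : ℕ} (hp : 1 < p) {π : R} (hπ : Irreducible π) (w : Rˣ) (b : K) :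
    b ^ p ≠ algebraMap R K ((w : R) * π) := by
  intro hb
  obtain ⟨a, d, hd, rfl⟩ := IsFractionRing.div_surjective (A := R) b
  have hd0 : d ≠ 0 := nonZeroDivisors.ne_zero hd
  have hinj : Function.Injective (algebraMap R K) := IsFractionRing.injective R K
  have hdK : algebraMap R K d ≠ 0 := fun h => hd0 (hinj (by simpa using h))
  have key : a ^ p = (w : R) * π * d ^ p := by
    apply hinj
    rw [div_pow, div_eq_iff (pow_ne_zero _ hdK)] at hb
    push_cast [map_mul, map_pow] at hb ⊢
    linear_combination hb
  have hrhs : (w : R) * π * d ^ p ≠ 0 :=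
    mul_ne_zero (mul_ne_zero w.ne_zero hπ.ne_zero) (pow_ne_zero _ hd0)
  have ha0 : a ≠ 0 := fun h => hrhs (by rw [← key, h, zero_pow (by omega)])
  obtain ⟨na, ua, hua⟩ := IsDiscreteValuationRing.eq_unit_mul_pow_irreducible ha0 hπ
  obtain ⟨nd, ud, hud⟩ := IsDiscreteValuationRing.eq_unit_mul_pow_irreducible hd0 hπ
  have heq : ((ua ^ p : Rˣ) : R) * π ^ (na * p) = ((w * ud ^ p : Rˣ) : R) * π ^ (nd * p + 1) := by
    push_cast
    rw [pow_mul π na p, ← mul_pow, ← hua, key, pow_succ' π, pow_mul π nd p, hud, mul_pow]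
    ring
  have hnn := IsDiscreteValuationRing.unit_mul_pow_congr_pow hπ hπ _ _ _ _ heq
  have hdvd : p ∣ 1 := by
    have h1 : p ∣ na * p := ⟨na, Nat.mul_comm _ _⟩
    have h2 : p ∣ nd * p := ⟨nd, Nat.mul_comm _ _⟩
    have h3 : na * p - nd * p = 1 := by rw [hnn, Nat.add_sub_cancel_left]
    exact h3 ▸ Nat.dvd_sub h1 h2
  exact absurd (Nat.le_of_dvd one_pos hdvd) (by omega)

/-- Let `R` be a complete discrete valuation ring with fraction field
`K` of characteristic `p`, perfect residue field of characteristic `p`, and uniformizer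
`π`.  Let `u ∈ Rˣ`, `1 ≤ i ≤ p - 1`, and `m, n ∈ ℕ` with `m·i = n·p + 1`.  Let `L/K` be
a degree-`p` field extension containing `α` with `α^p = u·π^i`, and set
`τ := π^{-n}·α^m ∈ L`.  Then `τ^p = u^m·π`, `R[τ]` is a discrete valuation ring equal to
the integral closure of `R` in `L`, and `R[τ] ≅ R[T]/(T^p - u^m·π)` as `R`-algebras. -/
theorem statement5 (p : ℕ) [Fact p.Prime]
    (R : Type*) [CommRing R] [IsDomain R] [IsDiscreteValuationRing R]
    [IsAdicComplete (IsLocalRing.maximalIdeal R) R]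
    (K : Type*) [Field K] [Algebra R K] [IsFractionRing R K] [CharP K p]
    [CharP (IsLocalRing.ResidueField R) p] [ExpChar (IsLocalRing.ResidueField R) p]
    [PerfectRing (IsLocalRing.ResidueField R) p]
    (π : R) (hπ : Irreducible π)
    (u : Rˣ) (i : ℕ) (hi1 : 1 ≤ i) (hi2 : i ≤ p - 1)
    (m n : ℕ) (hmn : m * i = n * p + 1)
    (L : Type*) [Field L] [Algebra K L] [Algebra R L] [IsScalarTower R K L]
    (hL : Module.finrank K L = p)
    (α : L) (hα : α ^ p = algebraMap R L ((u : R) * π ^ i))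
    (τ : L) (hτ : τ = (algebraMap R L π)⁻¹ ^ n * α ^ m) :
    τ ^ p = algebraMap R L ((u : R) ^ m * π) ∧
    (∃ _ : IsDomain (Algebra.adjoin R {τ} : Subalgebra R L),
      IsDiscreteValuationRing (Algebra.adjoin R {τ} : Subalgebra R L)) ∧
    Algebra.adjoin R {τ} = integralClosure R L ∧
    Nonempty ((Algebra.adjoin R {τ} : Subalgebra R L) ≃ₐ[R]
      (R[X] ⧸ Ideal.span {(X : R[X]) ^ p - C ((u : R) ^ m * π)})) := by
  have hp : p.Prime := Fact.out
  have hp1 : 1 < p := hp.one_lt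
  have hinjRK : Function.Injective (algebraMap R K) := IsFractionRing.injective R K
  have hinjKL : Function.Injective (algebraMap K L) := (algebraMap K L).injective
  have hRL : algebraMap R L = (algebraMap K L).comp (algebraMap R K) :=
    IsScalarTower.algebraMap_eq R K L
  have hinjRL : Function.Injective (algebraMap R L) := by
    rw [hRL]; exact hinjKL.comp hinjRK
  have hπ0 : π ≠ 0 := hπ.ne_zero
  have hπL : algebraMap R L π ≠ 0 := fun h => hπ0 (hinjRL (by simpa using h))
  -- Part 1 : τ ^ p = u^m π
  have part1 : τ ^ p = algebraMap R L ((u : R) ^ m * π) := by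
    have him : i * m = n * p + 1 := by rw [mul_comm]; exact hmn
    rw [hτ, mul_pow, ← pow_mul α m p, mul_comm m p, pow_mul α p m, hα, ← map_pow,
      mul_pow, ← pow_mul π i m, him, pow_succ, map_mul, map_mul, map_pow, map_pow]
    field_simp
    ring_nf
    rw [inv_pow, mul_assoc (algebraMap R L π), mul_inv_cancel₀ (pow_ne_zero _ hπL), map_mul, map_pow]
    ring
  have hCharL : CharP L p := charP_of_injective_algebraMap hinjKL p
  set c : R := (u : R) ^ m * π with hc
  have hcL : algebraMap K L (algebraMap R K c) = algebraMap R L c := by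
    rw [hRL]; rfl
  have hKirr : Irreducible ((X : K[X]) ^ p - C (algebraMap R K c)) := by
    apply X_pow_sub_C_irreducible_of_prime hp
    intro b hb
    refine not_pth_power K hp1 hπ (u ^ m) b ?_
    rw [hb, hc]; push_cast; rfl
  have hroot : aeval τ ((X : K[X]) ^ p - C (algebraMap R K c)) = 0 := by
    rw [map_sub, map_pow, aeval_X, aeval_C, hcL, part1, sub_self]
  have hmonicK : ((X : K[X]) ^ p - C (algebraMap R K c)).Monic :=
    monic_X_pow_sub_C _ (by omega)
  have hminpoly : minpoly K τ = (X : K[X]) ^ p - C (algebraMap R K c) :=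
    (minpoly.eq_of_irreducible_of_monic hKirr hroot hmonicK).symm
  have hτint : IsIntegral K τ := ⟨_, hmonicK, hroot⟩
  have hdegmin : (minpoly K τ).natDegree = p := by
    rw [hminpoly, natDegree_X_pow_sub_C]
  have hfin : FiniteDimensional K L := FiniteDimensional.of_finrank_pos (by rw [hL]; omega)
  have hadjtop : Algebra.adjoin K {τ} = ⊤ := by
    refine Algebra.toSubmodule_eq_top.mp (Submodule.eq_top_of_finrank_eq ?_)
    rw [hL]
    rw [show Module.finrank K (Subalgebra.toSubmodule (Algebra.adjoin K {τ})) =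
      Module.finrank K (Algebra.adjoin K {τ}) from rfl]
    rw [(Algebra.adjoin.powerBasis hτint).finrank, Algebra.adjoin.powerBasis_dim, hdegmin]
  have hrep : ∀ x : L, ∃ cf : ℕ → K,
      x = ∑ j ∈ Finset.range p, algebraMap K L (cf j) * τ ^ j := by
    intro x
    have hx : x ∈ Algebra.adjoin K {τ} := by rw [hadjtop]; trivial
    rw [Algebra.adjoin_singleton_eq_range_aeval] at hx
    obtain ⟨f, hf⟩ := hx
    have hmono := minpoly.monic hτint
    set r := f %ₘ (minpoly K τ) with hrdef
    have hr : aeval τ r = x := by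
      rw [hrdef, modByMonic_eq_sub_mul_div f (minpoly K τ), map_sub, map_mul, minpoly.aeval,
        zero_mul, sub_zero]
      exact hf
    have hdegr : r.natDegree < p := by
      rcases eq_or_ne r 0 with h0 | h0
      · rw [h0, natDegree_zero]; omega
      · have h1 := degree_modByMonic_lt f hmono
        rw [← hrdef] at h1
        have h2 : (minpoly K τ).degree = (p : ℕ) := by
          rw [hminpoly, degree_X_pow_sub_C (by omega) _]
        exact natDegree_lt_iff_degree_lt h0 |>.mpr (h2 ▸ h1)
    refine ⟨fun j => r.coeff j, ?_⟩
    rw [← hr, aeval_eq_sum_range' hdegr]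
    exact Finset.sum_congr rfl fun j _ => Algebra.smul_def _ _
  have huK : ∀ (w : Rˣ), IsUnit ((algebraMap R K) (w : R)) := by
    intro w
    exact (w.map (algebraMap R K).toMonoidHom).isUnit
  -- forward direction: p-th powers of elements of adjoin R {τ} lie in R
  have hfwd : ∀ x ∈ Algebra.adjoin R {τ}, ∃ r : R, algebraMap R L r = x ^ p := by
    intro x hx
    refine Algebra.adjoin_induction ?_ ?_ ?_ ?_ hx
    · rintro y (rfl : y = τ); exact ⟨c, part1.symm⟩
    · intro r; exact ⟨r ^ p, by rw [map_pow]⟩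
    · rintro a b _ _ ⟨ra, hra⟩ ⟨rb, hrb⟩
      exact ⟨ra + rb, by rw [map_add, hra, hrb, add_pow_char]⟩
    · rintro a b _ _ ⟨ra, hra⟩ ⟨rb, hrb⟩
      exact ⟨ra * rb, by rw [map_mul, hra, hrb, mul_pow]⟩
  -- backward direction
  have hbwd : ∀ x : L, (∃ r : R, algebraMap R L r = x ^ p) → x ∈ Algebra.adjoin R {τ} := by
    rintro x ⟨r, hr⟩
    obtain ⟨cf, hcf⟩ := hrep x
    have hpow : x ^ p =
        algebraMap K L (∑ j ∈ Finset.range p, cf j ^ p * (algebraMap R K c) ^ j) := by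
      rw [hcf, sum_pow_char, map_sum]
      refine Finset.sum_congr rfl fun j _ => ?_
      rw [mul_pow, ← pow_mul, mul_comm j p, pow_mul, part1, ← hcL]
      simp [map_mul, map_pow]
    have hKeq : (∑ j ∈ Finset.range p, cf j ^ p * (algebraMap R K c) ^ j)
        = algebraMap R K r := by
      apply hinjKL
      rw [← hpow, ← hr, hRL]; rfl
    have hπK : algebraMap R K π ≠ 0 := fun h => hπ0 (hinjRK (by simpa using h))
    -- descending induction on the exponent of the common denominator
    have hdesc : ∀ e : ℕ, ∀ b : ℕ → R, (∀ j < p, algebraMap R K (b j) = algebraMap R K π ^ e * cf j) →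
        ∀ j < p, ∃ a : R, algebraMap R K a = cf j := by
      intro e
      induction e with
      | zero => exact fun b hb j hj => ⟨b j, by simpa using hb j hj⟩
      | succ e ih =>
        intro b hb
        have hReq : ∑ k ∈ Finset.range p, b k ^ p * ((u : R) ^ m) ^ k * π ^ k
            = π ^ ((e + 1) * p) * r := by
          apply hinjRK
          rw [map_sum, map_mul, map_pow, ← hKeq, Finset.mul_sum]
          refine Finset.sum_congr rfl fun k hk => ?_
          rw [map_mul, map_mul, map_pow, map_pow, map_pow, hb k (Finset.mem_range.mp hk), hc,
            map_mul, map_pow]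
          push_cast
          rw [mul_pow, ← pow_mul]
          ring
        have hdvd : π ^ p ∣ ∑ k ∈ Finset.range p, b k ^ p * ((u : R) ^ m) ^ k * π ^ k := by
          rw [hReq]
          exact Dvd.dvd.mul_right (pow_dvd_pow π (by rw [add_one_mul]; exact Nat.le_add_left _ _)) r
        have hpeel := peel_lemma hπ.prime b (fun k => ((u : R) ^ m) ^ k)
          (fun k => ((u ^ m) ^ k).isUnit) hdvd
        choose q hq using hpeel
        refine ih (fun j => if h : j < p then q j h else 0) fun j hj => ?_
        have hbj := hb j hj
        rw [hq j hj, map_mul] at hbj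
        have : algebraMap R K π * (algebraMap R K (q j hj)) =
            algebraMap R K π * (algebraMap R K π ^ e * cf j) := by
          rw [hbj, pow_succ]; ring
        simp only [dif_pos hj]
        exact mul_left_cancel₀ hπK this
    -- the common denominator
    obtain ⟨d, hd⟩ := IsLocalization.exist_integer_multiples (nonZeroDivisors R)
      (Finset.range p) cf
    obtain ⟨e, ud, hude⟩ := IsDiscreteValuationRing.eq_unit_mul_pow_irreducible
      (nonZeroDivisors.ne_zero d.2) hπ
    have hd2 : ∀ j : ℕ, ∃ b : R, j < p → algebraMap R K b = algebraMap R K π ^ e * cf j := by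
      intro j
      by_cases hj : j < p
      · obtain ⟨b0, hb0⟩ := hd j (Finset.mem_range.mpr hj)
        refine ⟨((ud⁻¹ : Rˣ) : R) * b0, fun _ => ?_⟩
        rw [map_mul, hb0, Algebra.smul_def, hude, map_mul, map_pow]
        have h1 : algebraMap R K ((ud⁻¹ : Rˣ) : R) * algebraMap R K ((ud : Rˣ) : R) = 1 := by
          rw [← map_mul, Units.inv_mul, map_one]
        linear_combination (algebraMap R K π ^ e * cf j) * h1
      · exact ⟨0, fun h => absurd h hj⟩
    choose b hb using hd2
    have hfinal := hdesc e b fun j hj => hb j hj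
    choose a ha using hfinal
    rw [hcf]
    refine Subalgebra.sum_mem _ fun j hj => ?_
    have hj' := Finset.mem_range.mp hj
    have h1 : algebraMap K L (cf j) = algebraMap R L (a j hj') := by
      rw [IsScalarTower.algebraMap_apply R K L, ha j hj']
    rw [h1]
    exact (Algebra.adjoin R {τ}).mul_mem ((Algebra.adjoin R {τ}).algebraMap_mem _)
      ((Algebra.adjoin R {τ}).pow_mem (Algebra.subset_adjoin (Set.mem_singleton τ)) j)
  have hτmem : τ ∈ Algebra.adjoin R {τ} := Algebra.subset_adjoin (Set.mem_singleton τ)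
  have hc0 : c ≠ 0 := by rw [hc]; exact mul_ne_zero (pow_ne_zero _ u.ne_zero) hπ0
  have hcL0 : algebraMap R L c ≠ 0 := fun h => hc0 (hinjRL (by simpa using h))
  have hτ0 : τ ≠ 0 := by
    intro h
    rw [h, zero_pow hp.ne_zero] at part1
    exact hcL0 part1.symm
  -- integral closure
  have hint : Algebra.adjoin R {τ} = integralClosure R L := by
    apply le_antisymm
    · apply Algebra.adjoin_le
      rintro y (rfl : y = τ)
      refine ⟨(X : R[X]) ^ p - C c, monic_X_pow_sub_C c (by omega), ?_⟩
      rw [← aeval_def, map_sub, map_pow, aeval_X, aeval_C, part1, sub_self]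
    · intro y hy
      apply hbwd
      obtain ⟨cf, hcf⟩ := hrep y
      have hyK : y ^ p =
          algebraMap K L (∑ j ∈ Finset.range p, cf j ^ p * (algebraMap R K c) ^ j) := by
        rw [hcf, sum_pow_char, map_sum]
        refine Finset.sum_congr rfl fun j _ => ?_
        rw [mul_pow, ← pow_mul, mul_comm j p, pow_mul, part1, ← hcL]
        simp [map_mul, map_pow]
      have hyint : IsIntegral R y := hy
      have h1 : IsIntegral R (algebraMap K L
          (∑ j ∈ Finset.range p, cf j ^ p * (algebraMap R K c) ^ j)) := by
        rw [← hyK]; exact hyint.pow p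
      have h2 := (isIntegral_algebraMap_iff hinjKL).mp h1
      obtain ⟨r, hr⟩ := IsIntegrallyClosed.isIntegral_iff.mp h2
      exact ⟨r, by rw [IsScalarTower.algebraMap_apply R K L, hr, ← hyK]⟩
  -- kernel of evaluation
  have hg : aeval τ ((X : R[X]) ^ p - C c) = 0 := by
    rw [map_sub, map_pow, aeval_X, aeval_C, part1, sub_self]
  have hmg : ((X : R[X]) ^ p - C c).Monic := monic_X_pow_sub_C c (by omega)
  have hker : RingHom.ker (aeval τ : R[X] →ₐ[R] L) = Ideal.span {(X : R[X]) ^ p - C c} := by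
    apply le_antisymm
    · intro f hf
      have hf0 : aeval τ f = 0 := hf
      rw [Ideal.mem_span_singleton, ← modByMonic_eq_zero_iff_dvd hmg]
      by_contra h0
      have hrem : aeval τ (f %ₘ ((X : R[X]) ^ p - C c)) = 0 := by
        rw [modByMonic_eq_sub_mul_div f ((X : R[X]) ^ p - C c), map_sub, map_mul, hg, zero_mul, sub_zero, hf0]
      have hmapne : (f %ₘ ((X : R[X]) ^ p - C c)).map (algebraMap R K) ≠ 0 := fun h =>
        h0 ((Polynomial.map_eq_zero_iff hinjRK).mp h)
      have haev : aeval τ ((f %ₘ ((X : R[X]) ^ p - C c)).map (algebraMap R K)) = 0 := by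
        rw [aeval_map_algebraMap]; exact hrem
      have hdle := minpoly.degree_le_of_ne_zero K τ hmapne haev
      rw [hminpoly, degree_X_pow_sub_C (by omega) _] at hdle
      have hlt : ((f %ₘ ((X : R[X]) ^ p - C c)).map (algebraMap R K)).degree < (p : ℕ) := by
        rw [degree_map_eq_of_injective hinjRK]
        have := degree_modByMonic_lt f hmg
        rwa [degree_X_pow_sub_C (by omega : 0 < p) c] at this
      exact absurd (hdle.trans_lt hlt) (lt_irrefl _)
    · rw [Ideal.span_le, Set.singleton_subset_iff]
      exact hg
  -- the algebra isomorphism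
  have hiso : Nonempty ((Algebra.adjoin R {τ} : Subalgebra R L) ≃ₐ[R]
      (R[X] ⧸ Ideal.span {(X : R[X]) ^ p - C c})) := by
    refine ⟨?_⟩
    have e1 : (Algebra.adjoin R {τ} : Subalgebra R L) ≃ₐ[R]
        (aeval τ : R[X] →ₐ[R] L).range :=
      Subalgebra.equivOfEq _ _ (Algebra.adjoin_singleton_eq_range_aeval R τ)
    have e2 := Ideal.quotientKerAlgEquivOfSurjective
      (f := (aeval τ : R[X] →ₐ[R] L).rangeRestrict) (AlgHom.rangeRestrict_surjective _)
    have e3 : (R[X] ⧸ RingHom.ker (aeval τ : R[X] →ₐ[R] L).rangeRestrict) ≃ₐ[R]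
        (R[X] ⧸ Ideal.span {(X : R[X]) ^ p - C c}) :=
      Ideal.quotientEquivAlgOfEq R (by rw [AlgHom.ker_rangeRestrict, hker])
    exact e1.trans (e2.symm.trans e3)
  -- DVR
  have hDomain : IsDomain (Algebra.adjoin R {τ} : Subalgebra R L) := inferInstance
  set A := (Algebra.adjoin R {τ} : Subalgebra R L) with hA
  set τA : A := ⟨τ, hτmem⟩ with hτA
  have hunit : ∀ (y : L) (hy : y ∈ Algebra.adjoin R {τ}) (w : Rˣ),
      y ^ p = algebraMap R L (w : R) → IsUnit (⟨y, hy⟩ : A) := by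
    intro y hy w hw
    have hwL0 : algebraMap R L ((w : R)) ≠ 0 := fun h => w.ne_zero (hinjRL (by simpa using h))
    have hy0 : y ≠ 0 := fun h => hwL0 (by rw [← hw, h, zero_pow hp.ne_zero])
    have hwinv : algebraMap R L ((w⁻¹ : Rˣ) : R) = (y ^ p)⁻¹ := by
      have h2 : algebraMap R L ((w⁻¹ : Rˣ) : R) * y ^ p = 1 := by
        rw [hw, ← map_mul, Units.inv_mul, map_one]
      exact eq_inv_of_mul_eq_one_left h2
    have hyinvmem : y⁻¹ ∈ Algebra.adjoin R {τ} :=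
      hbwd _ ⟨((w⁻¹ : Rˣ) : R), by rw [hwinv, inv_pow]⟩
    exact IsUnit.of_mul_eq_one ⟨y⁻¹, hyinvmem⟩ (Subtype.ext (mul_inv_cancel₀ hy0))
  -- factorization into powers of τ
  have hfact : ∀ a : A, a ≠ 0 → ∃ k : ℕ, Associated (τA ^ k) a := by
    rintro ⟨y, hy⟩ ha0
    have hy0 : y ≠ 0 := fun h => ha0 (Subtype.ext h)
    obtain ⟨r, hr⟩ := hfwd y hy
    have hr0 : r ≠ 0 := by
      intro h
      rw [h, map_zero] at hr
      exact pow_ne_zero p hy0 hr.symm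
    obtain ⟨k, ur, hur⟩ := IsDiscreteValuationRing.eq_unit_mul_pow_irreducible hr0 hπ
    have hw0c : ((ur * ((u ^ m) ^ k)⁻¹ : Rˣ) : R) * c ^ k = r := by
      have h1 : (((u ^ m) ^ k)⁻¹ * (u ^ m) ^ k : Rˣ) = 1 := inv_mul_cancel _
      have h1' := congrArg (Units.val) h1
      push_cast at h1' ⊢
      rw [hur, hc, mul_pow ((u : R) ^ m) π k]
      linear_combination ((ur : R) * π ^ k) * h1'
    have hcLk : algebraMap R L (c ^ k) ≠ 0 := fun h => (pow_ne_zero k hc0) (hinjRL (by simpa using h))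
    have hτpk : (τ ^ k) ^ p = algebraMap R L (c ^ k) := by
      rw [← pow_mul, mul_comm k p, pow_mul, part1, map_pow]
    have hbbL : (y / τ ^ k) ^ p = algebraMap R L ((ur * ((u ^ m) ^ k)⁻¹ : Rˣ) : R) := by
      rw [div_pow, hτpk, div_eq_iff hcLk, ← map_mul, hw0c, hr]
    have hbbmem : y / τ ^ k ∈ Algebra.adjoin R {τ} := hbwd _ ⟨_, hbbL.symm⟩
    have hbbunit := hunit _ hbbmem _ hbbL
    refine ⟨k, hbbunit.unit, Subtype.ext ?_⟩
    have : ((τA ^ k * hbbunit.unit : A) : L) = τ ^ k * (y / τ ^ k) := by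
      rw [hbbunit.unit_spec]; rfl
    rw [this, mul_div_cancel₀ _ (pow_ne_zero k hτ0)]
  -- τ is irreducible in A
  have hτA0 : ¬ IsUnit τA := by
    intro hu
    obtain ⟨z, hz⟩ := hu.exists_right_inv
    obtain ⟨s, hs⟩ := hfwd z.val z.2
    have hzv : τ * z.val = 1 := congrArg Subtype.val hz
    have hcs : c * s = 1 := by
      apply hinjRL
      rw [map_mul, map_one, hs, ← part1, ← mul_pow, hzv, one_pow]
    rw [hc] at hcs
    exact hπ.not_isUnit (IsUnit.of_mul_eq_one (a := π) ((u : R) ^ m * s) (by linear_combination hcs))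
  have hirrτA : Irreducible τA := by
    constructor
    · exact hτA0
    · intro a b hab
      obtain ⟨ra, hra⟩ := hfwd a.val a.2
      obtain ⟨rb, hrb⟩ := hfwd b.val b.2
      have hab' : τ = a.val * b.val := congrArg Subtype.val hab
      have hcab : c = ra * rb := by
        apply hinjRL
        calc algebraMap R L c = τ ^ p := part1.symm
          _ = (a.val * b.val) ^ p := by rw [← hab']
          _ = a.val ^ p * b.val ^ p := mul_pow _ _ _
          _ = algebraMap R L ra * algebraMap R L rb := by rw [hra, hrb]
          _ = algebraMap R L (ra * rb) := (map_mul _ _ _).symm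
      have hcirr : Irreducible c := by
        have hassoc : Associated π c := ⟨u ^ m, by rw [hc]; push_cast; ring⟩
        exact hassoc.irreducible hπ
      rcases hcirr.isUnit_or_isUnit hcab with h | h
      · left
        have := hunit a.val a.2 h.unit (by rw [← hra, h.unit_spec])
        simpa using this
      · right
        have := hunit b.val b.2 h.unit (by rw [← hrb, h.unit_spec])
        simpa using this
  have hDVR : IsDiscreteValuationRing A :=
    IsDiscreteValuationRing.ofHasUnitMulPowIrreducibleFactorization
      ⟨τA, hirrτA, fun hx => hfact _ hx⟩
  exact ⟨part1, ⟨hDomain, hDVR⟩, hint, hiso⟩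
end

section
/- Let p be a prime and R a discrete valuation ring whose residue field k has characteristic p, and let u ∈ R^× be a unit whose image in k is not a p-th power. Then the quotient ring R[X]/(X^p − u) is a discrete valuation ring. -/
open Polynomial

/-- Let `p` be a prime and `R` a discrete valuation ring whose residue
field has characteristic `p`, and let `u ∈ Rˣ` be a unit whose residue class is not a
`p`-th power.  Then `R[X]/(X^p - u)` is a discrete valuation ring. -/
theorem statement6 (p : ℕ) [Fact p.Prime] (R : Type*) [CommRing R] [IsDomain R]
    [IsDiscreteValuationRing R] [CharP (IsLocalRing.ResidueField R) p]
    (u : Rˣ)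
    (hu : ¬ ∃ a : IsLocalRing.ResidueField R, a ^ p = IsLocalRing.residue R (u : R)) :
    ∃ _ : IsDomain (R[X] ⧸ Ideal.span {(X : R[X]) ^ p - C (u : R)}),
      IsDiscreteValuationRing (R[X] ⧸ Ideal.span {(X : R[X]) ^ p - C (u : R)}) := by
  have hp : p.Prime := Fact.out
  set f : R[X] := X ^ p - C (u : R) with hfdef
  have hmon : f.Monic := monic_X_pow_sub_C _ hp.ne_zero
  -- the reduction of `f` modulo the maximal ideal is irreducible
  have hirr' : Irreducible (f.map (IsLocalRing.residue R)) := by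
    have hmap : f.map (IsLocalRing.residue R)
        = X ^ p - C (IsLocalRing.residue R (u : R)) := by
      simp [hfdef]
    rw [hmap]
    exact X_pow_sub_C_irreducible_of_prime hp (fun b hb => hu ⟨b, hb⟩)
  have hirr : Irreducible f := hmon.irreducible_of_irreducible_map _ f hirr'
  have hprime : Prime f := hirr.prime
  haveI hPrime : (Ideal.span {f} : Ideal R[X]).IsPrime :=
    (Ideal.span_singleton_prime hmon.ne_zero).mpr hprime
  haveI hdom : IsDomain (AdjoinRoot f) := Ideal.Quotient.isDomain _
  haveI : IsNoetherianRing (AdjoinRoot f) :=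
    Ideal.Quotient.isNoetherianRing (Ideal.span {f})
  haveI : Module.Finite R (AdjoinRoot f) :=
    Module.Finite.of_basis (AdjoinRoot.powerBasis' hmon).basis
  haveI : Algebra.IsIntegral R (AdjoinRoot f) := Algebra.IsIntegral.of_finite R _
  -- the maximal ideal
  obtain ⟨π, hπ⟩ := IsDiscreteValuationRing.exists_irreducible R
  have hπspan : IsLocalRing.maximalIdeal R = Ideal.span {π} :=
    (IsDiscreteValuationRing.irreducible_iff_uniformizer π).mp hπ
  set M : Ideal (AdjoinRoot f) :=
    (IsLocalRing.maximalIdeal R).map (AdjoinRoot.of f) with hMdef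
  -- the quotient by `M` is a field
  have hbarirr : Irreducible
      (f.map (Ideal.Quotient.mk (IsLocalRing.maximalIdeal R))) := hirr'
  letI : Field (R ⧸ IsLocalRing.maximalIdeal R) := Ideal.Quotient.field _
  haveI : (Ideal.span {f.map (Ideal.Quotient.mk (IsLocalRing.maximalIdeal R))} :
      Ideal (R ⧸ IsLocalRing.maximalIdeal R)[X]).IsMaximal :=
    PrincipalIdealRing.isMaximal_of_irreducible hbarirr
  have hfieldq : IsField (AdjoinRoot f ⧸ M) := by
    refine MulEquiv.isField ?_
      (AdjoinRoot.quotAdjoinRootEquivQuotPolynomialQuot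
        (IsLocalRing.maximalIdeal R) f).toMulEquiv
    exact (Ideal.Quotient.field _).toIsField
  haveI hMmax : M.IsMaximal := Ideal.Quotient.maximal_of_isField _ hfieldq
  -- local ring
  haveI : IsLocalRing (AdjoinRoot f) := by
    refine IsLocalRing.of_unique_max_ideal ⟨M, hMmax, fun J hJ => ?_⟩
    haveI : J.IsMaximal := hJ
    have hc : (J.comap (algebraMap R (AdjoinRoot f))).IsMaximal :=
      Ideal.isMaximal_comap_of_isIntegral_of_isMaximal J
    have hcm : J.comap (algebraMap R (AdjoinRoot f)) = IsLocalRing.maximalIdeal R :=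
      IsLocalRing.eq_maximalIdeal hc
    have hle : M ≤ J := by
      rw [hMdef, ← AdjoinRoot.algebraMap_eq, Ideal.map_le_iff_le_comap, hcm]
    exact (hMmax.eq_of_le hJ.ne_top hle).symm
  have hMeq : M = IsLocalRing.maximalIdeal (AdjoinRoot f) :=
    IsLocalRing.eq_maximalIdeal hMmax
  have hMspan : M = Ideal.span {AdjoinRoot.of f π} := by
    rw [hMdef, hπspan, Ideal.map_span, Set.image_singleton]
  have hprinc : (IsLocalRing.maximalIdeal (AdjoinRoot f)).IsPrincipal :=
    ⟨AdjoinRoot.of f π, by rw [← hMeq, hMspan]⟩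
  -- `of f π ≠ 0`
  have hπ0 : AdjoinRoot.of f π ≠ 0 := by
    intro h
    rw [AdjoinRoot.of, RingHom.comp_apply] at h
    rw [AdjoinRoot.mk_eq_zero] at h
    have : (C π : R[X]) = 0 := by
      refine Polynomial.eq_zero_of_dvd_of_degree_lt h ?_
      refine lt_of_le_of_lt (degree_C_le) ?_
      rw [hfdef, degree_X_pow_sub_C hp.pos]
      exact_mod_cast hp.pos
    exact hπ.ne_zero (by simpa using this)
  have hnf : ¬ IsField (AdjoinRoot f) := by
    rw [IsLocalRing.isField_iff_maximalIdeal_eq, ← hMeq, hMspan,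
      Ideal.span_singleton_eq_bot]
    exact hπ0
  have hDVR : IsDiscreteValuationRing (AdjoinRoot f) :=
    ((IsDiscreteValuationRing.TFAE (AdjoinRoot f) hnf).out 0 4).mpr hprinc
  exact ⟨hdom, hDVR⟩
end

section
/- Let p be a prime, R a discrete valuation ring of characteristic p with uniformizer π, λ an element of the maximal ideal of R, δ ∈ R^× a unit, i ≥ 1 an integer, and m, n natural numbers with m·i = n·p + 1. Set A := R[x]/(x^p) and B := R[T]/(T^p − δ^{−m}·π), and write τ for the image of T in B. Then the element w := 1 + δ^n·(x ⊗ τ^i) + λ·(x ⊗ 1) of A ⊗_R B satisfies w^p = 1 (in particular w is a unit), the element s := (1 ⊗ τ)·w^{−m} satisfies s^p = δ^{−m}·π, and consequently there is a unique R-algebra homomorphism B → A ⊗_R B sending τ to s. -/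
open Polynomial

open scoped TensorProduct

private lemma aux1 {S : Type*} [CommRing S] (p : ℕ) [ExpChar S p] (a b : S)
    (ha : a ^ p = 0) (hb : b ^ p = 0) : (1 + a + b) ^ p = 1 := by
  rw [add_pow_expChar, add_pow_expChar, one_pow, ha, hb, add_zero, add_zero]

private lemma aux2 {S : Type*} [CommRing S] (p : ℕ) (hp : p ≠ 0) (w : S)
    (hw : w ^ p = 1) : IsUnit w :=
  isUnit_iff_exists_inv.mpr ⟨w ^ (p - 1), (by
    rw [← pow_succ', Nat.sub_add_cancel (Nat.one_le_iff_ne_zero.mpr hp), hw])⟩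

private lemma aux3 {S : Type*} [CommRing S] (p m : ℕ) (w t c : S) (hw : w ^ p = 1)
    (ht : t ^ p = c) : (t * Ring.inverse w ^ m) ^ p = c := by
  rw [mul_pow, ← pow_mul, Ring.inverse_pow, mul_comm m p, pow_mul, hw, one_pow,
    Ring.inverse_one, mul_one, ht]

private lemma aux4 {S : Type*} [CommRing S] (p : ℕ) (c u : S) (hu : u ^ p = 0) :
    (c * u) ^ p = 0 := by rw [mul_pow, hu, mul_zero]

set_option maxHeartbeats 1000000 in
/-- Let `R` be a discrete valuation ring of characteristic `p` with
uniformizer `π`, `lam` in the maximal ideal, `δ ∈ Rˣ`, `i ≥ 1`, and `m, n ∈ ℕ` with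
`m·i = n·p + 1`.  Set `A := R[x]/(x^p)`, `B := R[T]/(T^p - δ^{-m}·π)`, `τ` the image of
`T`.  Then `w := 1 + δ^n·(x ⊗ τ^i) + lam·(x ⊗ 1) ∈ A ⊗[R] B` satisfies `w^p = 1` (in
particular `w` is a unit), `s := (1 ⊗ τ)·w^{-m}` satisfies `s^p = δ^{-m}·π`, and there
is a unique `R`-algebra homomorphism `B → A ⊗[R] B` sending `τ` to `s`. -/
theorem statement8 (p : ℕ) [Fact p.Prime]
    (R : Type*) [CommRing R] [IsDomain R] [IsDiscreteValuationRing R] [CharP R p]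
    (π : R) (hπ : Irreducible π)
    (lam : R) (hlam : lam ∈ IsLocalRing.maximalIdeal R)
    (δ : Rˣ) (i : ℕ) (hi : 1 ≤ i) (m n : ℕ) (hmn : m * i = n * p + 1)
    (IA IB : Ideal R[X])
    (hIA : IA = Ideal.span {(X : R[X]) ^ p})
    (hIB : IB = Ideal.span {(X : R[X]) ^ p - C ((↑(δ⁻¹ ^ m) : R) * π)})
    (x : R[X] ⧸ IA) (hx : x = Ideal.Quotient.mk IA X)
    (τ : R[X] ⧸ IB) (hτ : τ = Ideal.Quotient.mk IB X)
    (w : (R[X] ⧸ IA) ⊗[R] (R[X] ⧸ IB))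
    (hw : w = 1 + @algebraMap R ((R[X] ⧸ IA) ⊗[R] (R[X] ⧸ IB)) _ Algebra.TensorProduct.instSemiring _ (↑(δ ^ n) : R) *
        (x ⊗ₜ[R] (τ ^ i)) +
      @algebraMap R ((R[X] ⧸ IA) ⊗[R] (R[X] ⧸ IB)) _ Algebra.TensorProduct.instSemiring _ lam * (x ⊗ₜ[R] (1 : R[X] ⧸ IB))) :
    w ^ p = 1 ∧ IsUnit w ∧
    (((1 : R[X] ⧸ IA) ⊗ₜ[R] τ) * (Ring.inverse w) ^ m) ^ p =
      @algebraMap R ((R[X] ⧸ IA) ⊗[R] (R[X] ⧸ IB)) _ Algebra.TensorProduct.instSemiring _ ((↑(δ⁻¹ ^ m) : R) * π) ∧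
    ∃! φ : (R[X] ⧸ IB) →ₐ[R] (R[X] ⧸ IA) ⊗[R] (R[X] ⧸ IB),
      φ τ = ((1 : R[X] ⧸ IA) ⊗ₜ[R] τ) * (Ring.inverse w) ^ m := by
  have hp : p.Prime := Fact.out
  have hp0 : p ≠ 0 := hp.ne_zero
  subst hw hx hτ hIA hIB
  set c : R := (↑(δ⁻¹ ^ m) : R) * π with hc
  have hSinj : Function.Injective (@algebraMap R
      ((R[X] ⧸ Ideal.span {(X : R[X]) ^ p}) ⊗[R]
        (R[X] ⧸ Ideal.span {(X : R[X]) ^ p - C c})) _ Algebra.TensorProduct.instSemiring _) := by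
    have hBinj : Function.Injective
        (algebraMap R (R[X] ⧸ Ideal.span {(X : R[X]) ^ p - C c})) := by
      have hdeg : ((X : R[X]) ^ p - C c).degree ≠ 0 := by
        rw [Polynomial.degree_X_pow_sub_C hp.pos]
        exact_mod_cast hp0
      have := AdjoinRoot.of.injective_of_degree_ne_zero (f := (X : R[X]) ^ p - C c) hdeg
      rwa [← AdjoinRoot.algebraMap_eq] at this
    have hev : ∀ a ∈ Ideal.span {(X : R[X]) ^ p}, (aeval (0 : R)) a = 0 := by
      intro a ha
      rw [Ideal.mem_span_singleton] at ha
      obtain ⟨g, rfl⟩ := ha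
      simp [zero_pow hp0]
    let ev : (R[X] ⧸ Ideal.span {(X : R[X]) ^ p}) →ₐ[R] R :=
      Ideal.Quotient.liftₐ _ (aeval (0 : R)) hev
    let g := Algebra.TensorProduct.lift
      ((IsScalarTower.toAlgHom R R (R[X] ⧸ Ideal.span {(X : R[X]) ^ p - C c})).comp ev)
      (AlgHom.id R (R[X] ⧸ Ideal.span {(X : R[X]) ^ p - C c})) (fun _ _ => mul_comm _ _)
    intro a b hab
    apply hBinj
    rw [← g.commutes a, ← g.commutes b, hab]
  haveI : CharP ((R[X] ⧸ Ideal.span {(X : R[X]) ^ p}) ⊗[R]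
      (R[X] ⧸ Ideal.span {(X : R[X]) ^ p - C c})) p :=
    charP_of_injective_algebraMap hSinj p
  haveI : ExpChar ((R[X] ⧸ Ideal.span {(X : R[X]) ^ p}) ⊗[R]
      (R[X] ⧸ Ideal.span {(X : R[X]) ^ p - C c})) p := ExpChar.prime hp
  have hxp : (Ideal.Quotient.mk (Ideal.span {(X : R[X]) ^ p}) X) ^ p = 0 := by
    rw [← map_pow, Ideal.Quotient.eq_zero_iff_mem]
    exact Ideal.subset_span rfl
  have hτp : (Ideal.Quotient.mk (Ideal.span {(X : R[X]) ^ p - C c}) X) ^ p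
      = algebraMap R (R[X] ⧸ Ideal.span {(X : R[X]) ^ p - C c}) c := by
    have halg : algebraMap R (R[X] ⧸ Ideal.span {(X : R[X]) ^ p - C c}) c
        = Ideal.Quotient.mk (Ideal.span {(X : R[X]) ^ p - C c}) (C c) := rfl
    rw [← map_pow, halg, ← sub_eq_zero, ← map_sub, Ideal.Quotient.eq_zero_iff_mem]
    exact Ideal.subset_span rfl
  set x := Ideal.Quotient.mk (Ideal.span {(X : R[X]) ^ p}) X with hx
  set τ := Ideal.Quotient.mk (Ideal.span {(X : R[X]) ^ p - C c}) X with hτ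
  set a := @algebraMap R ((R[X] ⧸ Ideal.span {(X : R[X]) ^ p}) ⊗[R]
      (R[X] ⧸ Ideal.span {(X : R[X]) ^ p - C c})) _ Algebra.TensorProduct.instSemiring _ (↑(δ ^ n) : R) * (x ⊗ₜ[R] (τ ^ i))
    with hab
  set b := @algebraMap R ((R[X] ⧸ Ideal.span {(X : R[X]) ^ p}) ⊗[R]
      (R[X] ⧸ Ideal.span {(X : R[X]) ^ p - C c})) _ Algebra.TensorProduct.instSemiring _ lam *
      (x ⊗ₜ[R] (1 : R[X] ⧸ Ideal.span {(X : R[X]) ^ p - C c})) with hbb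
  set w := 1 + a + b with hw
  have h1 : (x ⊗ₜ[R] (τ ^ i)) ^ p = (0 :
      (R[X] ⧸ Ideal.span {(X : R[X]) ^ p}) ⊗[R]
      (R[X] ⧸ Ideal.span {(X : R[X]) ^ p - C c})) := by
    calc (x ⊗ₜ[R] (τ ^ i)) ^ p = (x ^ p) ⊗ₜ[R] ((τ ^ i) ^ p) :=
          Algebra.TensorProduct.tmul_pow x (τ ^ i) p
      _ = (0 : R[X] ⧸ Ideal.span {(X : R[X]) ^ p}) ⊗ₜ[R] ((τ ^ i) ^ p) := by rw [hxp]
      _ = 0 := TensorProduct.zero_tmul _ ((τ ^ i) ^ p)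
  have h2 : (x ⊗ₜ[R] (1 : R[X] ⧸ Ideal.span {(X : R[X]) ^ p - C c})) ^ p = (0 :
      (R[X] ⧸ Ideal.span {(X : R[X]) ^ p}) ⊗[R]
      (R[X] ⧸ Ideal.span {(X : R[X]) ^ p - C c})) := by
    calc (x ⊗ₜ[R] (1 : R[X] ⧸ Ideal.span {(X : R[X]) ^ p - C c})) ^ p
        = (x ^ p) ⊗ₜ[R] ((1 : R[X] ⧸ Ideal.span {(X : R[X]) ^ p - C c}) ^ p) :=
          Algebra.TensorProduct.tmul_pow x 1 p
      _ = (0 : R[X] ⧸ Ideal.span {(X : R[X]) ^ p}) ⊗ₜ[R]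
            ((1 : R[X] ⧸ Ideal.span {(X : R[X]) ^ p - C c}) ^ p) := by rw [hxp]
      _ = 0 := TensorProduct.zero_tmul _ _
  have ha : a ^ p = 0 := by
    rw [hab]
    exact aux4 p (@algebraMap R ((R[X] ⧸ Ideal.span {(X : R[X]) ^ p}) ⊗[R] (R[X] ⧸ Ideal.span {(X : R[X]) ^ p - C c})) _ Algebra.TensorProduct.instSemiring _ (↑(δ ^ n) : R)) _ h1
  have hb : b ^ p = 0 := by
    rw [hbb]
    exact aux4 p (@algebraMap R ((R[X] ⧸ Ideal.span {(X : R[X]) ^ p}) ⊗[R] (R[X] ⧸ Ideal.span {(X : R[X]) ^ p - C c})) _ Algebra.TensorProduct.instSemiring _ lam) _ h2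
  have hwp : w ^ p = 1 := by
    rw [hw]; exact aux1 p a b ha hb
  have hwu : IsUnit w := aux2 p hp0 w hwp
  set s := ((1 : R[X] ⧸ Ideal.span {(X : R[X]) ^ p}) ⊗ₜ[R] τ) * (Ring.inverse w) ^ m
    with hs
  have ht : ((1 : R[X] ⧸ Ideal.span {(X : R[X]) ^ p}) ⊗ₜ[R] τ) ^ p
      = @algebraMap R ((R[X] ⧸ Ideal.span {(X : R[X]) ^ p}) ⊗[R]
        (R[X] ⧸ Ideal.span {(X : R[X]) ^ p - C c})) _ Algebra.TensorProduct.instSemiring _ c := by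
    calc ((1 : R[X] ⧸ Ideal.span {(X : R[X]) ^ p}) ⊗ₜ[R] τ) ^ p
        = ((1 : R[X] ⧸ Ideal.span {(X : R[X]) ^ p}) ^ p) ⊗ₜ[R] (τ ^ p) :=
          Algebra.TensorProduct.tmul_pow 1 τ p
      _ = (1 : R[X] ⧸ Ideal.span {(X : R[X]) ^ p}) ⊗ₜ[R] (τ ^ p) := by
          rw [one_pow (M := R[X] ⧸ Ideal.span {(X : R[X]) ^ p}) p]
      _ = (1 : R[X] ⧸ Ideal.span {(X : R[X]) ^ p}) ⊗ₜ[R]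
            (algebraMap R (R[X] ⧸ Ideal.span {(X : R[X]) ^ p - C c}) c) := by rw [hτp]
      _ = @algebraMap R ((R[X] ⧸ Ideal.span {(X : R[X]) ^ p}) ⊗[R]
            (R[X] ⧸ Ideal.span {(X : R[X]) ^ p - C c})) _ Algebra.TensorProduct.instSemiring _ c :=
          Algebra.TensorProduct.includeRight.commutes c
  have hsp : s ^ p = @algebraMap R ((R[X] ⧸ Ideal.span {(X : R[X]) ^ p}) ⊗[R]
      (R[X] ⧸ Ideal.span {(X : R[X]) ^ p - C c})) _ Algebra.TensorProduct.instSemiring _ c := by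
    rw [hs]; exact aux3 p m w _ _ hwp ht
  refine ⟨hwp, hwu, hsp, ?_⟩
  have hlift : ∀ q ∈ Ideal.span {(X : R[X]) ^ p - C c}, (aeval s) q = 0 := by
    intro q hq
    rw [Ideal.mem_span_singleton] at hq
    obtain ⟨g, rfl⟩ := hq
    have e0 : (aeval s) (((X : R[X]) ^ p - C c) * g)
        = (aeval s) ((X : R[X]) ^ p - C c) * (aeval s) g := map_mul _ _ _
    have e1 : (aeval s) ((X : R[X]) ^ p - C c)
        = (aeval s) ((X : R[X]) ^ p) - (aeval s) (C c) := map_sub _ _ _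
    have e2 : (aeval s) ((X : R[X]) ^ p) = ((aeval s) (X : R[X])) ^ p := by
      rw [aeval_X_pow, aeval_X]
    have e3 : (aeval s) (X : R[X]) = s := aeval_X s
    have e4 : (aeval s) (C c) = algebraMap R _ c := aeval_C s c
    rw [e0, e1, e2, e3, e4, hsp, sub_self]
    exact zero_mul ((aeval s) g)
  refine ⟨Ideal.Quotient.liftₐ _ (aeval s) hlift, ?_, ?_⟩
  · show Ideal.Quotient.liftₐ (Ideal.span {(X : R[X]) ^ p - C c}) (aeval s) hlift τ = s
    rw [hτ, Ideal.Quotient.liftₐ_apply]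
    exact aeval_X s
  · intro ψ hψ
    have hψ' : ψ τ = s := hψ
    apply Ideal.Quotient.algHom_ext
    apply Polynomial.algHom_ext
    rw [AlgHom.comp_apply, AlgHom.comp_apply, Ideal.Quotient.mkₐ_eq_mk, ← hτ, hψ',
      hτ, Ideal.Quotient.liftₐ_apply]
    exact (aeval_X s).symm
end
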